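/- Let E be a nonzero finite-dimensional real inner product space and let T : E → E be a symmetric (self-adjoint) positive semidefinite linear map, and let λ_max denote the largest eigenvalue of T. Then the following are equivalent: (i) there exists a twice continuously differentiable u : ℝ → E, not identically zero on [0,1], with u'' + T∘u = 0, u(0) = 0, u(1) = 0, and for every t ∈ (0,1) every twice continuously differentiable solution v of v'' + T∘v = 0 with v(0) = 0 and v(t) = 0 vanishes identically on [0,t]; (ii) λ_max = π². -/

import Mathlib

open scoped RealInnerProductSpace
open Real Set

/-! Auxiliary scalar function: `ss μ` is the solution of `u'' + μ u = 0`, `u 0 = 0`,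
`u' 0 = 1`. -/

noncomputable def ss (μ t : ℝ) : ℝ :=
  if μ = 0 then t else Real.sin (Real.sqrt μ * t) / Real.sqrt μ

lemma ss_zero (μ : ℝ) : ss μ 0 = 0 := by simp [ss]

lemma hasDerivAt_ss {μ : ℝ} (hμ : 0 ≤ μ) (t : ℝ) :
    HasDerivAt (ss μ) (Real.cos (Real.sqrt μ * t)) t := by
  rcases eq_or_lt_of_le hμ with h | h
  · have : ss μ = fun t : ℝ => t := by funext s; simp [ss, ← h]
    rw [this, ← h]
    simpa using hasDerivAt_id' t
  · have hr : (0:ℝ) < Real.sqrt μ := Real.sqrt_pos.2 h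
    have hμ0 : μ ≠ 0 := ne_of_gt h
    have h1 : HasDerivAt (fun s : ℝ => Real.sin (Real.sqrt μ * s))
        (Real.cos (Real.sqrt μ * t) * Real.sqrt μ) t := by
      have hinner : HasDerivAt (fun s : ℝ => Real.sqrt μ * s) (Real.sqrt μ) t := by
        simpa using (hasDerivAt_id t).const_mul (Real.sqrt μ)
      exact (Real.hasDerivAt_sin (Real.sqrt μ * t)).comp t hinner
    have h2 := h1.div_const (Real.sqrt μ)
    have : ss μ = fun s : ℝ => Real.sin (Real.sqrt μ * s) / Real.sqrt μ := by
      funext s; simp [ss, hμ0]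
    rw [this]
    refine h2.congr_deriv ?_
    field_simp

lemma hasDerivAt_cs {μ : ℝ} (hμ : 0 ≤ μ) (t : ℝ) :
    HasDerivAt (fun s : ℝ => Real.cos (Real.sqrt μ * s)) (-(μ * ss μ t)) t := by
  have hinner : HasDerivAt (fun s : ℝ => Real.sqrt μ * s) (Real.sqrt μ) t := by
    simpa using (hasDerivAt_id t).const_mul (Real.sqrt μ)
  have h1 := (Real.hasDerivAt_cos (Real.sqrt μ * t)).comp t hinner
  refine HasDerivAt.congr_deriv h1 (Eq.symm ?_)
  rcases eq_or_lt_of_le hμ with h | h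
  · simp [ss, ← h]
  · have hr : (0:ℝ) < Real.sqrt μ := Real.sqrt_pos.2 h
    have hrr : Real.sqrt μ * Real.sqrt μ = μ := Real.mul_self_sqrt hμ
    simp only [ss, if_neg (ne_of_gt h)]
    field_simp
    linear_combination (Real.sin (Real.sqrt μ * t)) * Real.sq_sqrt hμ

lemma contDiff_ss (μ : ℝ) : ContDiff ℝ 2 (ss μ) := by
  rcases eq_or_ne μ 0 with h | h
  · have : ss μ = fun t : ℝ => t := by funext s; simp [ss, h]
    rw [this]; exact contDiff_id
  · have : ss μ = fun s : ℝ => Real.sin (Real.sqrt μ * s) / Real.sqrt μ := by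
      funext s; simp [ss, h]
    rw [this]
    exact ((Real.contDiff_sin.of_le le_top).comp
      ((contDiff_const.mul contDiff_id : ContDiff ℝ 2 fun s : ℝ => Real.sqrt μ * s))).div_const _

lemma ss_pos {μ t : ℝ} (hμ : 0 ≤ μ) (hμ' : μ ≤ Real.pi ^ 2) (ht : 0 < t) (ht1 : t < 1) :
    0 < ss μ t := by
  rcases eq_or_lt_of_le hμ with h | h
  · simpa [ss, ← h] using ht
  · have hr : (0:ℝ) < Real.sqrt μ := Real.sqrt_pos.2 h
    have hrpi : Real.sqrt μ ≤ Real.pi := by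
      calc Real.sqrt μ ≤ Real.sqrt (Real.pi ^ 2) := Real.sqrt_le_sqrt hμ'
        _ = Real.pi := Real.sqrt_sq Real.pi_pos.le
    have h1 : 0 < Real.sqrt μ * t := mul_pos hr ht
    have h2 : Real.sqrt μ * t < Real.pi := by nlinarith
    have := Real.sin_pos_of_pos_of_lt_pi h1 h2
    simp only [ss, if_neg (ne_of_gt h)]
    positivity

lemma ss_one_eq_zero {μ : ℝ} (hμ : 0 ≤ μ) (h : ss μ 1 = 0) : Real.pi ^ 2 ≤ μ := by
  rcases eq_or_lt_of_le hμ with h0 | h0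
  · exfalso; simp [ss, ← h0] at h
  · have hr : (0:ℝ) < Real.sqrt μ := Real.sqrt_pos.2 h0
    simp only [ss, if_neg (ne_of_gt h0), div_eq_zero_iff] at h
    rcases h with h | h
    · by_contra hlt
      push_neg at hlt
      have hrpi : Real.sqrt μ < Real.pi := by
        have := Real.sqrt_lt_sqrt hμ hlt
        rwa [Real.sqrt_sq Real.pi_pos.le] at this
      have hs := Real.sin_pos_of_pos_of_lt_pi hr hrpi
      rw [mul_one] at h
      linarith
    · exact absurd h (ne_of_gt hr)

/-- Uniqueness for the second-order linear ODE `u'' = -T u`. -/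
lemma ode_unique {E : Type*} [NormedAddCommGroup E] [InnerProductSpace ℝ E]
    [FiniteDimensional ℝ E] (T : E →ₗ[ℝ] E) {f g : ℝ → E} {a c : ℝ}
    (hf : ContDiff ℝ 2 f) (hg : ContDiff ℝ 2 g)
    (hf' : ∀ t, deriv (deriv f) t = -(T (f t)))
    (hg' : ∀ t, deriv (deriv g) t = -(T (g t)))
    (h0 : f a = g a) (h1 : deriv f a = deriv g a) :
    ∀ t ∈ Set.Icc a c, f t = g t := by
  set Tc : E →L[ℝ] E := LinearMap.toContinuousLinearMap T with hTc
  set L : E × E →L[ℝ] E × E :=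
    (ContinuousLinearMap.snd ℝ E E).prod (-(Tc.comp (ContinuousLinearMap.fst ℝ E E))) with hL
  have two_eq : (2 : WithTop ℕ∞) = 1 + 1 := by norm_num
  have hfd : Differentiable ℝ f := hf.differentiable (by norm_num)
  have hgd : Differentiable ℝ g := hg.differentiable (by norm_num)
  have hfd' : Differentiable ℝ (deriv f) := by
    have := (contDiff_succ_iff_deriv.mp (two_eq ▸ hf)).2.2
    exact this.differentiable one_ne_zero
  have hgd' : Differentiable ℝ (deriv g) := by
    have := (contDiff_succ_iff_deriv.mp (two_eq ▸ hg)).2.2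
    exact this.differentiable one_ne_zero
  have key : Set.EqOn (fun t => (f t, deriv f t)) (fun t => (g t, deriv g t)) (Set.Icc a c) := by
    apply ODE_solution_unique (v := fun _ p => L p) (K := ‖L‖₊)
    · exact fun _ => L.lipschitz
    · exact (hfd.continuous.prodMk hfd'.continuous).continuousOn
    · intro t _
      have : HasDerivAt (fun t => (f t, deriv f t))
          (deriv f t, deriv (deriv f) t) t :=
        ((hfd t).hasDerivAt).prodMk ((hfd' t).hasDerivAt)
      have heq : (deriv f t, deriv (deriv f) t) = L (f t, deriv f t) := by
        simp [hL, hf' t, hTc]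
      exact (heq ▸ this).hasDerivWithinAt
    · exact (hgd.continuous.prodMk hgd'.continuous).continuousOn
    · intro t _
      have : HasDerivAt (fun t => (g t, deriv g t))
          (deriv g t, deriv (deriv g) t) t :=
        ((hgd t).hasDerivAt).prodMk ((hgd' t).hasDerivAt)
      have heq : (deriv g t, deriv (deriv g) t) = L (g t, deriv g t) := by
        simp [hL, hg' t, hTc]
      exact (heq ▸ this).hasDerivWithinAt
    · simp [h0, h1]
  intro t ht
  have := key ht
  exact congrArg Prod.fst this

theorem stmt1 {E : Type*} [NormedAddCommGroup E] [InnerProductSpace ℝ E]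
    [FiniteDimensional ℝ E] [Nontrivial E]
    (T : E →ₗ[ℝ] E) (hsym : T.IsSymmetric) (hpsd : ∀ x : E, 0 ≤ ⟪T x, x⟫)
    (lmax : ℝ) (hlmax : IsGreatest {μ : ℝ | Module.End.HasEigenvalue T μ} lmax) :
    (∃ u : ℝ → E, ContDiff ℝ 2 u ∧ ¬ (∀ t ∈ Set.Icc (0:ℝ) 1, u t = 0) ∧
        (∀ t : ℝ, deriv (deriv u) t + T (u t) = 0) ∧ u 0 = 0 ∧ u 1 = 0 ∧
        (∀ t ∈ Set.Ioo (0:ℝ) 1, ∀ v : ℝ → E, ContDiff ℝ 2 v →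
          (∀ s : ℝ, deriv (deriv v) s + T (v s) = 0) → v 0 = 0 → v t = 0 →
          ∀ s ∈ Set.Icc (0:ℝ) t, v s = 0)) ↔
      lmax = Real.pi ^ 2 := by
  classical
  have hn : Module.finrank ℝ E = Module.finrank ℝ E := rfl
  set b := hsym.eigenvectorBasis hn with hbdef
  set μ := hsym.eigenvalues hn with hμdef
  have hTb : ∀ i, T (b i) = μ i • b i := fun i => by
    exact_mod_cast hsym.apply_eigenvectorBasis hn i
  have hμ0 : ∀ i, 0 ≤ μ i := by
    intro i
    have h1 := hpsd (b i)
    rw [hTb i, real_inner_smul_left, real_inner_self_eq_norm_sq, b.orthonormal.1 i] at h1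
    simpa using h1
  have hμle : ∀ i, μ i ≤ lmax := fun i => hlmax.2 (hsym.hasEigenvalue_eigenvalues hn i)
  set sol : E → ℝ → E := fun w t => ∑ i, (ss (μ i) t * b.repr w i) • b i with hsol
  set sol' : E → ℝ → E :=
    fun w t => ∑ i, (Real.cos (Real.sqrt (μ i) * t) * b.repr w i) • b i with hsol'
  have hsolderiv : ∀ w t, HasDerivAt (sol w) (sol' w t) t := fun w t =>
    HasDerivAt.fun_sum fun i _ => ((hasDerivAt_ss (hμ0 i) t).mul_const _).smul_const _
  have hsolderiv' : ∀ w t, HasDerivAt (sol' w) (-(T (sol w t))) t := by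
    intro w t
    have h1 : HasDerivAt (sol' w) (∑ i, (-(μ i * ss (μ i) t) * b.repr w i) • b i) t :=
      HasDerivAt.fun_sum fun i _ => ((hasDerivAt_cs (hμ0 i) t).mul_const _).smul_const _
    convert h1 using 1
    rw [hsol]
    simp only [map_sum, map_smul, hTb, smul_smul, ← Finset.sum_neg_distrib]
    refine Finset.sum_congr rfl fun i _ => ?_
    rw [← neg_smul]
    ring_nf
  have hsolC : ∀ w, ContDiff ℝ 2 (sol w) := fun w => ContDiff.sum fun i _ =>
    ((contDiff_ss (μ i)).mul contDiff_const).smul contDiff_const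
  have hsol0 : ∀ w, sol w 0 = 0 := by intro w; simp [hsol, ss_zero]
  have hder : ∀ w, deriv (sol w) = sol' w := fun w => funext fun t => (hsolderiv w t).deriv
  have hODEsol : ∀ w t, deriv (deriv (sol w)) t = -(T (sol w t)) := by
    intro w t; rw [hder]; exact (hsolderiv' w t).deriv
  have hder0 : ∀ w, deriv (sol w) 0 = w := by
    intro w
    rw [hder]
    simp only [hsol', mul_zero, Real.cos_zero, one_mul]
    exact b.sum_repr w
  have hcoef : ∀ (d : Fin (Module.finrank ℝ E) → ℝ), ∑ i, d i • b i = 0 → ∀ i, d i = 0 := by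
    intro d hd i
    have h2 : ⟪b i, (0:E)⟫ = d i := by
      rw [← hd]; exact b.orthonormal.inner_right_fintype d i
    simpa using h2.symm
  have hrep : ∀ (v : ℝ → E), ContDiff ℝ 2 v → (∀ s, deriv (deriv v) s + T (v s) = 0) →
      v 0 = 0 → ∀ c : ℝ, ∀ s ∈ Set.Icc (0:ℝ) c, v s = sol (deriv v 0) s := by
    intro v hv hODE hv0 c
    exact ode_unique T hv (hsolC _)
      (fun s => eq_neg_of_add_eq_zero_left (hODE s)) (hODEsol _)
      (hv0.trans (hsol0 _).symm) (hder0 _).symm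
  have hsolzero : ∀ t : ℝ, sol 0 t = 0 := by
    intro t; simp [hsol]
  constructor
  · rintro ⟨u, hu2, hune, huode, hu0, hu1, hmin⟩
    set w := deriv u 0 with hwdef
    have hurep : ∀ s ∈ Set.Icc (0:ℝ) 1, u s = sol w s := hrep u hu2 huode hu0 1
    have hw : w ≠ 0 := by
      intro hw0
      apply hune
      intro t ht
      rw [hurep t ht, hw0, hsolzero]
    obtain ⟨j, hj⟩ : ∃ j, b.repr w j ≠ 0 := by
      by_contra hc
      push_neg at hc
      apply hw
      conv_lhs => rw [← b.sum_repr w]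
      exact Finset.sum_eq_zero fun i _ => by rw [hc i]; simp
    have h1 : sol w 1 = 0 := by rw [← hurep 1 (by norm_num)]; exact hu1
    have hcoef1 := hcoef (fun i => ss (μ i) 1 * b.repr w i) h1 j
    have h2 : ss (μ j) 1 = 0 := by
      rcases mul_eq_zero.mp hcoef1 with h | h
      · exact h
      · exact absurd h hj
    have hge : Real.pi ^ 2 ≤ lmax := le_trans (ss_one_eq_zero (hμ0 j) h2) (hμle j)
    by_contra hne
    have hgt : Real.pi ^ 2 < lmax := lt_of_le_of_ne hge (Ne.symm hne)
    obtain ⟨e, he⟩ := hlmax.1.exists_hasEigenvector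
    have hTe : T e = lmax • e := he.apply_eq_smul
    have he0 : e ≠ 0 := he.2
    have hlpos : 0 < lmax := lt_trans (by positivity) hgt
    have hr : Real.pi < Real.sqrt lmax := by
      have := Real.sqrt_lt_sqrt (by positivity) hgt
      rwa [Real.sqrt_sq Real.pi_pos.le] at this
    have hrpos : 0 < Real.sqrt lmax := lt_trans Real.pi_pos hr
    set t₀ : ℝ := Real.pi / Real.sqrt lmax with ht₀def
    have ht₀ : t₀ ∈ Set.Ioo (0:ℝ) 1 := by
      constructor
      · positivity
      · rw [ht₀def, div_lt_one hrpos]; exact hr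
    set v : ℝ → E := fun s => ss lmax s • e with hv
    have hvC : ContDiff ℝ 2 v := (contDiff_ss lmax).smul contDiff_const
    have hvd : ∀ s, HasDerivAt v (Real.cos (Real.sqrt lmax * s) • e) s := fun s =>
      (hasDerivAt_ss hlpos.le s).smul_const e
    have hvd2 : ∀ s, deriv (deriv v) s + T (v s) = 0 := by
      intro s
      have hd1 : deriv v = fun s => Real.cos (Real.sqrt lmax * s) • e :=
        funext fun s => (hvd s).deriv
      have hd2 : HasDerivAt (fun s => Real.cos (Real.sqrt lmax * s) • e)
          ((-(lmax * ss lmax s)) • e) s := (hasDerivAt_cs hlpos.le s).smul_const e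
      rw [hd1, hd2.deriv, hv]
      simp only [map_smul, hTe, smul_smul, ← add_smul]
      rw [show -(lmax * ss lmax s) + ss lmax s * lmax = 0 by ring, zero_smul]
    have hv0 : v 0 = 0 := by simp [hv, ss_zero]
    have hmul : Real.sqrt lmax * t₀ = Real.pi := by
      rw [ht₀def]; field_simp
    have hvt₀ : v t₀ = 0 := by
      rw [hv]
      simp only [ss, if_neg (ne_of_gt hlpos), hmul, Real.sin_pi, zero_div, zero_smul]
    have hzero := hmin t₀ ht₀ v hvC hvd2 hv0 hvt₀ (t₀/2)
      ⟨by positivity, by linarith [ht₀.1]⟩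
    have hmul2 : Real.sqrt lmax * (t₀/2) = Real.pi/2 := by
      rw [ht₀def]; field_simp
    rw [hv] at hzero
    simp only [ss, if_neg (ne_of_gt hlpos), hmul2, Real.sin_pi_div_two] at hzero
    rcases smul_eq_zero.mp hzero with h | h
    · rw [div_eq_zero_iff] at h
      rcases h with h | h
      · exact one_ne_zero h
      · exact (ne_of_gt hrpos) h
    · exact he0 h
  · intro hl
    obtain ⟨e, he⟩ := hlmax.1.exists_hasEigenvector
    have hTe : T e = (Real.pi ^ 2) • e := by rw [← hl]; exact he.apply_eq_smul
    have he0 : e ≠ 0 := he.2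
    have hpi2 : (0:ℝ) < Real.pi ^ 2 := by positivity
    have hsq : Real.sqrt (Real.pi ^ 2) = Real.pi := Real.sqrt_sq Real.pi_pos.le
    refine ⟨fun t => ss (Real.pi ^ 2) t • e,
      (contDiff_ss _).smul contDiff_const, ?_, ?_, by simp [ss_zero], ?_, ?_⟩
    · intro hall
      have := hall (1/2) (by norm_num)
      simp only [ss, if_neg (ne_of_gt hpi2), hsq] at this
      rw [show Real.pi * (1/2 : ℝ) = Real.pi/2 by ring, Real.sin_pi_div_two] at this
      rcases smul_eq_zero.mp this with h | h
      · rw [div_eq_zero_iff] at h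
        rcases h with h | h
        · exact one_ne_zero h
        · exact (ne_of_gt Real.pi_pos) h
      · exact he0 h
    · intro t
      have hd1 : deriv (fun t => ss (Real.pi ^ 2) t • e)
          = fun s => Real.cos (Real.sqrt (Real.pi ^ 2) * s) • e :=
        funext fun s => ((hasDerivAt_ss hpi2.le s).smul_const e).deriv
      have hd2 : HasDerivAt (fun s => Real.cos (Real.sqrt (Real.pi ^ 2) * s) • e)
          ((-(Real.pi ^ 2 * ss (Real.pi ^ 2) t)) • e) t :=
        (hasDerivAt_cs hpi2.le t).smul_const e
      rw [hd1, hd2.deriv]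
      simp only [map_smul, hTe, smul_smul, ← add_smul]
      rw [show -(Real.pi ^ 2 * ss (Real.pi ^ 2) t) + ss (Real.pi ^ 2) t * Real.pi ^ 2 = 0
        by ring, zero_smul]
    · simp only [ss, if_neg (ne_of_gt hpi2), hsq, mul_one, Real.sin_pi, zero_div, zero_smul]
    · intro t ht v hvC hvODE hv0 hvt
      set w := deriv v 0 with hwdef
      have hvrep : ∀ s ∈ Set.Icc (0:ℝ) t, v s = sol w s := hrep v hvC hvODE hv0 t
      have hwt : sol w t = 0 := by
        rw [← hvrep t ⟨le_of_lt ht.1, le_rfl⟩]; exact hvt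
      have hall : ∀ i, b.repr w i = 0 := by
        intro i
        have h := hcoef (fun i => ss (μ i) t * b.repr w i) hwt i
        have hpos := ss_pos (hμ0 i) (hl ▸ hμle i) ht.1 ht.2
        rcases mul_eq_zero.mp h with h' | h'
        · exact absurd h' (ne_of_gt hpos)
        · exact h'
      have hw0 : w = 0 := by
        conv_lhs => rw [← b.sum_repr w]
        exact Finset.sum_eq_zero fun i _ => by rw [hall i]; simp
      intro s hs
      rw [hvrep s hs, hw0, hsolzero]
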